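/- Let X be a Hausdorff space, G a group of homeomorphisms of X, and N a non-trivial normal subgroup of G. Then there exists a non-empty open subset U ⊂ X such that the commutator subgroup [G_U, G_U] of the rigid stabilizer G_U is contained in N. -/

import Mathlib

/-- The rigid stabilizer of a subset `U`: the subgroup of elements fixing the complement
of `U` pointwise. -/
def rigidStabilizer (G : Type*) {X : Type*} [Group G] [MulAction G X] (U : Set X) :
    Subgroup G where
  carrier := {g : G | ∀ x : X, x ∉ U → g • x = x}
  one_mem' := fun x _ => one_smul G x
  mul_mem' := by
    intro a b ha hb x hx
    rw [mul_smul, hb x hx, ha x hx]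
  inv_mem' := by
    intro a ha x hx
    nth_rewrite 1 [← ha x hx]
    rw [inv_smul_smul]

lemma rigidStabilizer_mem {G X : Type*} [Group G] [MulAction G X] {U : Set X} {b : G}
    (hb : b ∈ rigidStabilizer G U) : ∀ x : X, x ∉ U → b • x = x := hb

lemma rigidStabilizer_maps {G X : Type*} [Group G] [MulAction G X] {U : Set X} {b : G}
    (hb : b ∈ rigidStabilizer G U) {x : X} (hx : x ∈ U) : b • x ∈ U := by
  by_contra h
  have h2 := rigidStabilizer_mem ((rigidStabilizer G U).inv_mem hb) (b • x) h
  rw [inv_smul_smul] at h2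
  rw [← h2] at h
  exact h hx

/-- If `G` is a group of homeomorphisms of a Hausdorff space `X` and `N` is a non-trivial
normal subgroup of `G`, then there is a non-empty open `U ⊆ X` with `[G_U, G_U] ≤ N`. -/
theorem exists_open_commutator_rigidStabilizer_le {G X : Type*} [Group G]
    [TopologicalSpace X] [T2Space X] [MulAction G X]
    (hcont : ∀ g : G, Continuous fun x : X => g • x)
    (hfaithful : ∀ g : G, (∀ x : X, g • x = x) → g = 1)
    (N : Subgroup G) (hN : N.Normal) (hNbot : N ≠ ⊥) :
    ∃ U : Set X, IsOpen U ∧ U.Nonempty ∧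
      ⁅rigidStabilizer G U, rigidStabilizer G U⁆ ≤ N := by
  obtain ⟨g, hgN, hg1⟩ := N.bot_or_exists_ne_one.resolve_left hNbot
  have hmoved : ¬ (∀ x : X, g • x = x) := fun h => hg1 (hfaithful g h)
  push_neg at hmoved
  obtain ⟨x, hx⟩ := hmoved
  obtain ⟨V, W, hV, hW, hgxV, hxW, hVW⟩ := t2_separation hx
  refine ⟨W ∩ (fun y => g • y) ⁻¹' V, hW.inter ((hcont g).isOpen_preimage V hV),
    ⟨x, hxW, hgxV⟩, ?_⟩
  set U : Set X := W ∩ (fun y => g • y) ⁻¹' V with hU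
  have hdisj : ∀ y : X, y ∈ U → g • y ∉ U := by
    intro y hy hgy
    exact (Set.disjoint_left.mp hVW hy.2) hgy.1
  rw [Subgroup.commutator_le]
  intro a ha b hb
  obtain ⟨d, hd⟩ : ∃ d : G, d = g * a⁻¹ * g⁻¹ := ⟨_, rfl⟩
  have hdfix : ∀ y : X, y ∉ (fun z => g • z) '' U → d • y = y := by
    intro y hy
    have h1 : g⁻¹ • y ∉ U := fun h => hy ⟨g⁻¹ • y, h, by simp⟩
    rw [hd, mul_smul, mul_smul,
      rigidStabilizer_mem ((rigidStabilizer G U).inv_mem ha) _ h1, smul_inv_smul]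
  have hdmaps : ∀ y : X, y ∈ (fun z => g • z) '' U → d • y ∈ (fun z => g • z) '' U := by
    rintro y ⟨z, hz, rfl⟩
    refine ⟨a⁻¹ • z, rigidStabilizer_maps ((rigidStabilizer G U).inv_mem ha) hz, ?_⟩
    simp [hd, mul_smul]
  have hUsub : ∀ y : X, y ∈ U → y ∉ (fun z => g • z) '' U := by
    rintro y hy ⟨z, hz, rfl⟩
    exact hdisj z hz hy
  -- c := a * g * a⁻¹ * g⁻¹ = a * d ∈ N
  have hcN : a * g * a⁻¹ * g⁻¹ ∈ N := N.mul_mem (hN.conj_mem g hgN a) (N.inv_mem hgN)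
  -- d commutes with anything in the rigid stabilizer of U
  have hcomm : ∀ c : G, c ∈ rigidStabilizer G U → d * c = c * d := by
    intro c hc
    have hpt : ∀ y : X, (d * c) • y = (c * d) • y := by
      intro y
      by_cases hy : y ∈ U
      · have h1 := hUsub y hy
        rw [mul_smul, mul_smul, hdfix y h1, hdfix _ (hUsub _ (rigidStabilizer_maps hc hy))]
      · by_cases hgy : y ∈ (fun z => g • z) '' U
        · have h2 : d • y ∉ U := by
            intro h
            exact hUsub _ h (hdmaps y hgy)
          rw [mul_smul, mul_smul, rigidStabilizer_mem hc _ hy, rigidStabilizer_mem hc _ h2]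
        · rw [mul_smul, mul_smul, rigidStabilizer_mem hc _ hy, hdfix y hgy,
            rigidStabilizer_mem hc _ hy]
    have heq : ∀ y : X, ((c * d)⁻¹ * (d * c)) • y = y := by
      intro y
      rw [mul_smul, hpt, inv_smul_smul]
    have := hfaithful _ heq
    rw [inv_mul_eq_one] at this
    exact this.symm
  -- [a, b] = [a*d, b] ∈ N
  have h1 : d * b = b * d := hcomm b hb
  open scoped commutatorElement in
  have key : ⁅a, b⁆ = ⁅a * g * a⁻¹ * g⁻¹, b⁆ := by
    have hac : a * g * a⁻¹ * g⁻¹ = a * d := by rw [hd]; group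
    rw [hac, commutatorElement_def, commutatorElement_def]
    calc a * b * a⁻¹ * b⁻¹ = a * (b * d) * d⁻¹ * a⁻¹ * b⁻¹ := by group
      _ = a * (d * b) * d⁻¹ * a⁻¹ * b⁻¹ := by rw [h1]
      _ = a * d * b * (a * d)⁻¹ * b⁻¹ := by group
  rw [key]
  have h2 : b * (a * g * a⁻¹ * g⁻¹)⁻¹ * b⁻¹ ∈ N := hN.conj_mem _ (N.inv_mem hcN) b
  have h3 := N.mul_mem hcN h2
  convert h3 using 1
  group
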